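/- Let Π₁ and Π₂ be Markov kernels on (E, B(E)), both reversible with respect to the probability measure μ, and suppose there exists ϱ ≥ 0 such that E_{Π₂}(f) ≥ ϱ · E_{Π₁}(f) for every f ∈ L²₀(E,μ). Then Gap(Π₂) ≥ ϱ · Gap(Π₁); and if ϱ > 0, then for every f ∈ L²₀(E,μ), V(f,Π₂) ≤ (ϱ^{−1} − 1) ‖f‖²_μ + ϱ^{−1} V(f,Π₁), where V(f,Π) := 2 sup_{g ∈ L²₀(E,μ)}[2⟨f,g⟩_μ − E_Π(g)] − ‖f‖²_μ is the variational representation of the asymptotic variance of f along the μ-reversible chain with kernel Π. -/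

import Mathlib

open MeasureTheory ProbabilityTheory
open scoped ENNReal

/-- The Dirichlet form `E_K(f) = ∫ f (f - Kf) dμ` of a Markov transition `K`. -/
noncomputable def dform {α : Type*} [MeasurableSpace α]
    (μ : Measure α) (K : α → Measure α) (f : α → ℝ) : ℝ :=
  ∫ x, f x * (f x - ∫ y, f y ∂(K x)) ∂μ

/-- The right spectral gap `Gap(K) = inf {E_K(f)/‖f‖²_μ : f ∈ L²₀(μ), ‖f‖_μ > 0}`
(valued in `[0, ∞]`, with the convention `inf ∅ = ∞`). -/
noncomputable def gapE {α : Type*} [MeasurableSpace α]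
    (μ : Measure α) (K : α → Measure α) : ℝ≥0∞ :=
  sInf {r : ℝ≥0∞ | ∃ f : α → ℝ, MemLp f 2 μ ∧ (∫ x, f x ∂μ) = 0 ∧ 0 < ∫ x, f x ^ 2 ∂μ ∧
    r = ENNReal.ofReal (dform μ K f / ∫ x, f x ^ 2 ∂μ)}

/-- The variational representation of the asymptotic variance,
`V(f, K) = 2 sup_{g ∈ L²₀(μ)} [2⟨f, g⟩_μ - E_K(g)] - ‖f‖²_μ`, valued in the extended reals. -/
noncomputable def vvar {α : Type*} [MeasurableSpace α]
    (μ : Measure α) (K : α → Measure α) (f : α → ℝ) : EReal :=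
  2 * sSup {r : EReal | ∃ g : α → ℝ, MemLp g 2 μ ∧ (∫ x, g x ∂μ) = 0 ∧
      r = ((2 * (∫ x, f x * g x ∂μ) - dform μ K g : ℝ) : EReal)}
    - ((∫ x, f x ^ 2 ∂μ : ℝ) : EReal)


lemma dform_smul {α : Type*} [MeasurableSpace α] (μ : Measure α) (K : α → Measure α)
    (c : ℝ) (g : α → ℝ) :
    dform μ K (fun x => c * g x) = c ^ 2 * dform μ K g := by
  unfold dform
  rw [← integral_const_mul _ _]
  apply integral_congr_ae
  filter_upwards with x
  rw [integral_const_mul _ _]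
  ring

lemma inner_smul_right' {α : Type*} [MeasurableSpace α] (μ : Measure α)
    (c : ℝ) (f g : α → ℝ) :
    (∫ x, f x * (c * g x) ∂μ) = c * ∫ x, f x * g x ∂μ := by
  rw [← integral_const_mul _ _]
  apply integral_congr_ae
  filter_upwards with x
  ring

/-- If two `μ`-reversible Markov kernels satisfy `E_{Π₂}(f) ≥ ϱ E_{Π₁}(f)` on `L²₀(μ)`, then
`Gap(Π₂) ≥ ϱ Gap(Π₁)`, and if `ϱ > 0` also
`V(f, Π₂) ≤ (ϱ⁻¹ - 1) ‖f‖²_μ + ϱ⁻¹ V(f, Π₁)` for every `f ∈ L²₀(μ)`. -/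
theorem dirichlet_comparison {E : Type*} [MeasurableSpace E]
    (μ : Measure E) [IsProbabilityMeasure μ]
    (P₁ P₂ : Kernel E E) [IsMarkovKernel P₁] [IsMarkovKernel P₂]
    (hrev₁ : ∀ A B : Set E, MeasurableSet A → MeasurableSet B →
      ∫⁻ x in A, P₁ x B ∂μ = ∫⁻ x in B, P₁ x A ∂μ)
    (hrev₂ : ∀ A B : Set E, MeasurableSet A → MeasurableSet B →
      ∫⁻ x in A, P₂ x B ∂μ = ∫⁻ x in B, P₂ x A ∂μ)
    (ϱ : ℝ) (hϱ : 0 ≤ ϱ)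
    (hcomp : ∀ f : E → ℝ, MemLp f 2 μ → (∫ x, f x ∂μ) = 0 →
      ϱ * dform μ (fun x => P₁ x) f ≤ dform μ (fun x => P₂ x) f) :
    ENNReal.ofReal ϱ * gapE μ (fun x => P₁ x) ≤ gapE μ (fun x => P₂ x) ∧
    (0 < ϱ → ∀ f : E → ℝ, MemLp f 2 μ → (∫ x, f x ∂μ) = 0 →
      vvar μ (fun x => P₂ x) f ≤
        (((ϱ⁻¹ - 1) * ∫ x, f x ^ 2 ∂μ : ℝ) : EReal) +
          ((ϱ⁻¹ : ℝ) : EReal) * vvar μ (fun x => P₁ x) f) := by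
  constructor
  · refine le_sInf fun r hr => ?_
    obtain ⟨f, hf, hf0, hfpos, rfl⟩ := hr
    have h1 : gapE μ (fun x => P₁ x) ≤
        ENNReal.ofReal (dform μ (fun x => P₁ x) f / ∫ x, f x ^ 2 ∂μ) :=
      sInf_le ⟨f, hf, hf0, hfpos, rfl⟩
    calc ENNReal.ofReal ϱ * gapE μ (fun x => P₁ x)
        ≤ ENNReal.ofReal ϱ *
            ENNReal.ofReal (dform μ (fun x => P₁ x) f / ∫ x, f x ^ 2 ∂μ) :=
          mul_le_mul_right h1 _
      _ = ENNReal.ofReal (ϱ * (dform μ (fun x => P₁ x) f / ∫ x, f x ^ 2 ∂μ)) :=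
          (ENNReal.ofReal_mul hϱ).symm
      _ ≤ ENNReal.ofReal (dform μ (fun x => P₂ x) f / ∫ x, f x ^ 2 ∂μ) := by
          apply ENNReal.ofReal_le_ofReal
          rw [mul_div_assoc']
          exact div_le_div_of_nonneg_right (hcomp f hf hf0) hfpos.le
  · intro hϱpos f hf hf0
    unfold vvar
    set n : ℝ := ∫ x, f x ^ 2 ∂μ with hn
    set S₁ : Set EReal := {r : EReal | ∃ g : E → ℝ, MemLp g 2 μ ∧ (∫ x, g x ∂μ) = 0 ∧
      r = ((2 * (∫ x, f x * g x ∂μ) - dform μ (fun x => P₁ x) g : ℝ) : EReal)} with hS₁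
    set S₂ : Set EReal := {r : EReal | ∃ g : E → ℝ, MemLp g 2 μ ∧ (∫ x, g x ∂μ) = 0 ∧
      r = ((2 * (∫ x, f x * g x ∂μ) - dform μ (fun x => P₂ x) g : ℝ) : EReal)} with hS₂
    have hz : ∀ (K : E → Measure E), ((0 : ℝ) : EReal) =
        ((2 * (∫ x, f x * (fun _ : E => (0:ℝ)) x ∂μ) - dform μ K (fun _ => (0:ℝ)) : ℝ) : EReal) := by
      intro K
      simp [dform]
    have h0₁ : ((0:ℝ) : EReal) ∈ S₁ := ⟨fun _ => 0, memLp_const 0, by simp, hz _⟩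
    have h0₂ : ((0:ℝ) : EReal) ∈ S₂ := ⟨fun _ => 0, memLp_const 0, by simp, hz _⟩
    have hB0 : (0 : EReal) ≤ sSup S₁ := by
      simpa using le_sSup h0₁
    have hA0 : (0 : EReal) ≤ sSup S₂ := by
      simpa using le_sSup h0₂
    have hAB : sSup S₂ ≤ ((ϱ⁻¹ : ℝ) : EReal) * sSup S₁ := by
      refine sSup_le fun r hr => ?_
      obtain ⟨g, hg, hg0, rfl⟩ := hr
      set v₁ : ℝ := 2 * (∫ x, f x * ((fun x => ϱ * g x) x) ∂μ) -
        dform μ (fun x => P₁ x) (fun x => ϱ * g x) with hv₁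
      have hmem : ((v₁ : ℝ) : EReal) ∈ S₁ := by
        refine ⟨fun x => ϱ * g x, hg.const_mul ϱ, ?_, rfl⟩
        rw [integral_const_mul _ _, hg0, mul_zero]
      have hreal : (2 * (∫ x, f x * g x ∂μ) - dform μ (fun x => P₂ x) g : ℝ) ≤ ϱ⁻¹ * v₁ := by
        have hc := hcomp g hg hg0
        rw [hv₁, inner_smul_right' μ ϱ f g, dform_smul]
        have hϱne : ϱ ≠ 0 := ne_of_gt hϱpos
        have key : ϱ⁻¹ * (2 * (ϱ * ∫ x, f x * g x ∂μ) - ϱ ^ 2 * dform μ (fun x => P₁ x) g)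
            = 2 * (∫ x, f x * g x ∂μ) - ϱ * dform μ (fun x => P₁ x) g := by
          field_simp
        rw [key]
        linarith
      calc ((2 * (∫ x, f x * g x ∂μ) - dform μ (fun x => P₂ x) g : ℝ) : EReal)
          ≤ ((ϱ⁻¹ * v₁ : ℝ) : EReal) := EReal.coe_le_coe_iff.mpr hreal
        _ = ((ϱ⁻¹ : ℝ) : EReal) * ((v₁ : ℝ) : EReal) := EReal.coe_mul _ _
        _ ≤ ((ϱ⁻¹ : ℝ) : EReal) * sSup S₁ := by
            apply mul_le_mul_of_nonneg_left (le_sSup hmem)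
            exact_mod_cast le_of_lt (inv_pos.mpr hϱpos)
    rcases eq_or_ne (sSup S₁) ⊤ with hBtop | hBtop
    · have : (((ϱ⁻¹ : ℝ)) : EReal) * (2 * sSup S₁ - ((n : ℝ) : EReal)) = ⊤ := by
        rw [hBtop]
        rw [show (2 : EReal) * ⊤ = ⊤ from EReal.mul_top_of_pos (by norm_num)]
        rw [EReal.top_sub_coe]
        exact EReal.coe_mul_top_of_pos (inv_pos.mpr hϱpos)
      rw [this, EReal.coe_add_top]
      exact le_top
    · have hBbot : sSup S₁ ≠ ⊥ := ne_bot_of_le_ne_bot (by simp) hB0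
      obtain ⟨b, hb⟩ : ∃ b : ℝ, sSup S₁ = (b : EReal) := ⟨(sSup S₁).toReal,
        (EReal.coe_toReal hBtop hBbot).symm⟩
      have hAtop : sSup S₂ ≠ ⊤ := by
        intro h
        rw [h, hb, ← EReal.coe_mul] at hAB
        exact EReal.coe_ne_top _ (top_le_iff.mp hAB)
      have hAbot : sSup S₂ ≠ ⊥ := ne_bot_of_le_ne_bot (by simp) hA0
      obtain ⟨a, ha⟩ : ∃ a : ℝ, sSup S₂ = (a : EReal) := ⟨(sSup S₂).toReal,
        (EReal.coe_toReal hAtop hAbot).symm⟩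
      have hab : a ≤ ϱ⁻¹ * b := by
        rw [ha, hb, ← EReal.coe_mul] at hAB
        exact_mod_cast hAB
      rw [ha, hb]
      have e1 : (2 : EReal) * ((a : ℝ) : EReal) - ((n : ℝ) : EReal) = ((2 * a - n : ℝ) : EReal) := by
        norm_cast
      have e2 : (((ϱ⁻¹ - 1) * n : ℝ) : EReal) + ((ϱ⁻¹ : ℝ) : EReal) *
          ((2 : EReal) * ((b : ℝ) : EReal) - ((n : ℝ) : EReal)) =
          (((ϱ⁻¹ - 1) * n + ϱ⁻¹ * (2 * b - n) : ℝ) : EReal) := by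
        norm_cast
      rw [e1, e2]
      apply EReal.coe_le_coe_iff.mpr
      nlinarith [hab, inv_pos.mpr hϱpos]
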